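/- Let X be a compact metric space and κ a Markov transition probability kernel on X with the Feller property. Let (Φ_n)_{n≥0} be the Markov chain with kernel κ and any initial distribution μ, realized as the coordinate process on X^ℕ under ℙ_μ. Then ℙ_μ-almost surely the following holds: whenever (n_k) is a strictly increasing sequence of integers and ν is a Borel probability measure on X such that (1/n_k) Σ_{i=0}^{n_k−1} δ_{Φ_i} converges to ν in the weak-* topology, ν is a stationary measure, i.e. ∫_X κ(x)(A) dν(x) = ν(A) for every Borel set A ⊆ X. -/

import Mathlib

open MeasureTheory Filter
open scoped ENNReal

lemma nat_sqrt_tendsto : Tendsto Nat.sqrt atTop atTop := by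
  apply tendsto_atTop_atTop.2
  intro b
  exact ⟨b * b, fun a ha => Nat.le_sqrt.2 (le_trans ha (le_refl _))⟩

lemma gap_lemma (C : ℝ) (hC : 0 ≤ C) (S : ℕ → ℝ) (hS0 : S 0 = 0)
    (hstep : ∀ m, |S (m + 1) - S m| ≤ C)
    (hsq : Tendsto (fun n : ℕ => ((n ^ 2 : ℕ) : ℝ)⁻¹ * S (n ^ 2)) atTop (nhds 0)) :
    Tendsto (fun m : ℕ => ((m : ℝ))⁻¹ * S m) atTop (nhds 0) := by
  -- increments bound
  have hdiff : ∀ k m : ℕ, k ≤ m → |S m - S k| ≤ C * (m - k) := by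
    intro k m hkm
    induction m with
    | zero => interval_cases k; simp
    | succ m ih =>
      rcases Nat.lt_or_ge k (m + 1) with h | h
      · have hk : k ≤ m := Nat.lt_succ_iff.mp h
        have := ih hk
        have h2 := hstep m
        calc |S (m + 1) - S k| = |(S (m + 1) - S m) + (S m - S k)| := by ring_nf
          _ ≤ |S (m + 1) - S m| + |S m - S k| := abs_add_le _ _
          _ ≤ C + C * (m - k) := add_le_add h2 this
          _ = C * ((m + 1 : ℕ) - k) := by push_cast; ring
      · have : k = m + 1 := le_antisymm hkm h
        subst this; simp
  -- the dominating sequence indexed by sqrt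
  set g : ℕ → ℝ := fun n => |((n ^ 2 : ℕ) : ℝ)⁻¹ * S (n ^ 2)| + 3 * C * (n : ℝ)⁻¹ with hg
  have hgten : Tendsto g atTop (nhds 0) := by
    have h1 : Tendsto (fun n : ℕ => |((n ^ 2 : ℕ) : ℝ)⁻¹ * S (n ^ 2)|) atTop (nhds 0) := by
      simpa using hsq.abs
    have h2 : Tendsto (fun n : ℕ => 3 * C * (n : ℝ)⁻¹) atTop (nhds 0) := by
      have := tendsto_inv_atTop_zero.comp (tendsto_natCast_atTop_atTop (R := ℝ))
      simpa using (this.const_mul (3 * C))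
    rw [hg]; simpa using h1.add h2
  have key : ∀ m : ℕ, 1 ≤ m → |((m : ℝ))⁻¹ * S m| ≤ g (Nat.sqrt m) := by
    intro m hm
    set n := Nat.sqrt m with hn
    have hn1 : 1 ≤ n := Nat.le_sqrt.2 (by simpa using hm)
    have hle : n ^ 2 ≤ m := by simpa [pow_two] using Nat.sqrt_le m
    have hlt : m < (n + 1) ^ 2 := by simpa [pow_two] using Nat.lt_succ_sqrt m
    have hgap : (m : ℝ) - (n ^ 2 : ℕ) ≤ 2 * n + 1 := by
      have : m ≤ n ^ 2 + 2 * n := by nlinarith [hlt]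
      push_cast
      have : (m : ℝ) ≤ (n : ℝ) ^ 2 + 2 * n := by exact_mod_cast this
      nlinarith
    have hSm : |S m| ≤ |S (n ^ 2)| + C * (2 * n + 1) := by
      have h1 := hdiff (n ^ 2) m hle
      have h2 : C * ((m : ℝ) - (n ^ 2 : ℕ)) ≤ C * (2 * n + 1) := by
        apply mul_le_mul_of_nonneg_left hgap hC
      calc |S m| = |(S m - S (n ^ 2)) + S (n ^ 2)| := by ring_nf
        _ ≤ |S m - S (n ^ 2)| + |S (n ^ 2)| := abs_add_le _ _
        _ ≤ C * (2 * n + 1) + |S (n ^ 2)| := by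
            exact add_le_add (le_trans h1 h2) le_rfl
        _ = |S (n ^ 2)| + C * (2 * n + 1) := by ring
    have hmpos : (0 : ℝ) < m := by exact_mod_cast hm
    have hn2pos : (0 : ℝ) < ((n ^ 2 : ℕ) : ℝ) := by positivity
    have hn2m : ((n ^ 2 : ℕ) : ℝ) ≤ m := by exact_mod_cast hle
    calc |((m : ℝ))⁻¹ * S m| = (m : ℝ)⁻¹ * |S m| := by
          rw [abs_mul, abs_of_nonneg (by positivity)]
      _ ≤ (m : ℝ)⁻¹ * (|S (n ^ 2)| + C * (2 * n + 1)) := by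
          apply mul_le_mul_of_nonneg_left hSm (by positivity)
      _ = (m : ℝ)⁻¹ * |S (n ^ 2)| + (m : ℝ)⁻¹ * (C * (2 * n + 1)) := by ring
      _ ≤ ((n ^ 2 : ℕ) : ℝ)⁻¹ * |S (n ^ 2)| + 3 * C * (n : ℝ)⁻¹ := by
          apply add_le_add
          · exact mul_le_mul_of_nonneg_right
              (inv_anti₀ hn2pos hn2m) (abs_nonneg _)
          · -- (m)⁻¹ * (C * (2n+1)) ≤ 3C/n since m ≥ n² and 2n+1 ≤ 3n
            have h3 : C * (2 * (n : ℝ) + 1) ≤ C * (3 * n) := by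
              apply mul_le_mul_of_nonneg_left _ hC
              have : (1 : ℝ) ≤ n := by exact_mod_cast hn1
              linarith
            have h4 : (m : ℝ)⁻¹ ≤ ((n : ℝ) * n)⁻¹ := by
              apply inv_anti₀ (by positivity)
              have : ((n ^ 2 : ℕ) : ℝ) ≤ m := hn2m
              push_cast at this; nlinarith
            calc (m : ℝ)⁻¹ * (C * (2 * n + 1)) ≤ ((n : ℝ) * n)⁻¹ * (C * (3 * n)) := by
                  apply mul_le_mul h4 h3 (by positivity) (by positivity)
              _ = 3 * C * (n : ℝ)⁻¹ := by
                  have hnpos : (0 : ℝ) < n := by exact_mod_cast hn1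
                  field_simp
      _ = g n := by
          rw [hg]
          congr 1
          rw [abs_mul, abs_of_nonneg (by positivity : (0:ℝ) ≤ ((n ^ 2 : ℕ) : ℝ)⁻¹)]
  have habs : Tendsto (fun m : ℕ => |((m : ℝ))⁻¹ * S m|) atTop (nhds 0) := by
    apply squeeze_zero' (Eventually.of_forall fun m => abs_nonneg _)
      (eventually_atTop.2 ⟨1, fun m hm => key m hm⟩)
    exact hgten.comp nat_sqrt_tendsto
  exact (tendsto_zero_iff_abs_tendsto_zero _).2 habs


lemma aux_main {Ω : Type*} [MeasurableSpace Ω] (ℙ : Measure Ω) [IsProbabilityMeasure ℙ]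
    (D : ℕ → Ω → ℝ) (hmeas : ∀ i, Measurable (D i)) (B : ℝ) (hB : 0 ≤ B)
    (hb : ∀ i ω, |D i ω| ≤ B)
    (horth : ∀ i j, i < j → ∫ ω, D i ω * D j ω ∂ℙ = 0) :
    ∀ᵐ ω ∂ℙ, Tendsto (fun n : ℕ => (n : ℝ)⁻¹ * ∑ i ∈ Finset.range n, D i ω)
      atTop (nhds 0) := by
  set S : ℕ → Ω → ℝ := fun n ω => ∑ i ∈ Finset.range n, D i ω with hS
  have hSmeas : ∀ n, Measurable (S n) := fun n => Finset.measurable_sum _ fun i _ => hmeas i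
  have int_bdd : ∀ (f : Ω → ℝ), Measurable f → ∀ M : ℝ, (∀ ω, |f ω| ≤ M) → Integrable f ℙ :=
    fun f hf M hM => ⟨hf.aestronglyMeasurable,
      HasFiniteIntegral.of_bounded (C := M) (Eventually.of_forall (by simpa [Real.norm_eq_abs] using hM))⟩
  have hint : ∀ i j, Integrable (fun ω => D i ω * D j ω) ℙ := fun i j =>
    int_bdd _ ((hmeas i).mul (hmeas j)) (B * B) (fun ω => by
      rw [abs_mul]; exact mul_le_mul (hb i ω) (hb j ω) (abs_nonneg _) hB)
  have hoffdiag : ∀ i j, i ≠ j → ∫ ω, D i ω * D j ω ∂ℙ = 0 := by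
    intro i j hij
    rcases lt_or_gt_of_ne hij with h | h
    · exact horth i j h
    · simpa [mul_comm] using horth j i h
  -- variance bound
  have hvar : ∀ n, ∫ ω, (S n ω) ^ 2 ∂ℙ ≤ B ^ 2 * n := by
    intro n
    have hexp : ∀ ω, (S n ω) ^ 2 = ∑ i ∈ Finset.range n, ∑ j ∈ Finset.range n, D i ω * D j ω := by
      intro ω; rw [pow_two, hS]; exact Finset.sum_mul_sum _ _ _ _
    have h1 : ∫ ω, (S n ω) ^ 2 ∂ℙ
        = ∑ i ∈ Finset.range n, ∑ j ∈ Finset.range n, ∫ ω, D i ω * D j ω ∂ℙ := by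
      simp_rw [hexp]
      rw [integral_finset_sum _ fun i _ => integrable_finset_sum _ fun j _ => hint i j]
      exact Finset.sum_congr rfl fun i _ => integral_finset_sum _ fun j _ => hint i j
    rw [h1]
    have h2 : ∀ i ∈ Finset.range n,
        ∑ j ∈ Finset.range n, ∫ ω, D i ω * D j ω ∂ℙ = ∫ ω, D i ω * D i ω ∂ℙ := by
      intro i hi
      exact Finset.sum_eq_single_of_mem i hi fun j _ hji => hoffdiag i j (Ne.symm hji)
    rw [Finset.sum_congr rfl h2]
    have h3 : ∀ i, ∫ ω, D i ω * D i ω ∂ℙ ≤ B ^ 2 := by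
      intro i
      calc ∫ ω, D i ω * D i ω ∂ℙ ≤ ∫ _ω, B ^ 2 ∂ℙ := by
            apply integral_mono (hint i i) (integrable_const _)
            intro ω
            show D i ω * D i ω ≤ B ^ 2
            rw [← abs_mul_abs_self (D i ω), pow_two]
            exact mul_le_mul (hb i ω) (hb i ω) (abs_nonneg _) hB
        _ = B ^ 2 := by simp
    calc ∑ i ∈ Finset.range n, ∫ ω, D i ω * D i ω ∂ℙ ≤ ∑ _i ∈ Finset.range n, B ^ 2 :=
          Finset.sum_le_sum fun i _ => h3 i
      _ = B ^ 2 * n := by simp [mul_comm]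
  -- a.e. convergence along squares
  set A : ℕ → Ω → ℝ := fun n ω => ((n ^ 2 : ℕ) : ℝ)⁻¹ * S (n ^ 2) ω with hA
  have hAmeas : ∀ n, Measurable (A n) := fun n => (hSmeas (n ^ 2)).const_mul _
  have hAbdd : ∀ n ω, |A n ω| ≤ B := by
    intro n ω
    rw [hA]
    rcases Nat.eq_zero_or_pos n with h | h
    · simp [h, hB]
    · have hpos : (0 : ℝ) < ((n ^ 2 : ℕ) : ℝ) := by positivity
      have hSb : |S (n ^ 2) ω| ≤ B * (n ^ 2 : ℕ) := by
        calc |S (n ^ 2) ω| ≤ ∑ i ∈ Finset.range (n ^ 2), |D i ω| :=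
              Finset.abs_sum_le_sum_abs _ _
          _ ≤ ∑ _i ∈ Finset.range (n ^ 2), B := Finset.sum_le_sum fun i _ => hb i ω
          _ = B * (n ^ 2 : ℕ) := by simp [mul_comm]
      rw [abs_mul, abs_of_nonneg (by positivity : (0:ℝ) ≤ ((n ^ 2 : ℕ) : ℝ)⁻¹)]
      rw [inv_mul_le_iff₀ hpos]
      calc |S (n ^ 2) ω| ≤ B * (n ^ 2 : ℕ) := hSb
        _ = ((n ^ 2 : ℕ) : ℝ) * B := by ring
  have hAvar : ∀ n : ℕ, 1 ≤ n → ∫ ω, (A n ω) ^ 2 ∂ℙ ≤ B ^ 2 / n ^ 2 := by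
    intro n hn
    have hpos : (0 : ℝ) < ((n ^ 2 : ℕ) : ℝ) := by positivity
    have : ∀ ω, (A n ω) ^ 2 = (((n ^ 2 : ℕ) : ℝ)⁻¹) ^ 2 * (S (n ^ 2) ω) ^ 2 := by
      intro ω; rw [hA]; ring
    simp_rw [this]
    rw [integral_const_mul]
    have h1 : (((n ^ 2 : ℕ) : ℝ)⁻¹) ^ 2 * ∫ ω, (S (n ^ 2) ω) ^ 2 ∂ℙ
        ≤ (((n ^ 2 : ℕ) : ℝ)⁻¹) ^ 2 * (B ^ 2 * (n ^ 2 : ℕ)) :=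
      mul_le_mul_of_nonneg_left (hvar (n ^ 2)) (by positivity)
    calc (((n ^ 2 : ℕ) : ℝ)⁻¹) ^ 2 * ∫ ω, (S (n ^ 2) ω) ^ 2 ∂ℙ
        ≤ (((n ^ 2 : ℕ) : ℝ)⁻¹) ^ 2 * (B ^ 2 * (n ^ 2 : ℕ)) := h1
      _ = B ^ 2 / ((n ^ 2 : ℕ) : ℝ) := by
          rw [pow_two, div_eq_mul_inv]
          field_simp
      _ = B ^ 2 / n ^ 2 := by push_cast; ring
  -- Borel-Cantelli via summable lintegrals
  set F : ℕ → Ω → ℝ≥0∞ := fun n ω => ENNReal.ofReal ((A n ω) ^ 2) with hF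
  have hFmeas : ∀ n, Measurable (F n) := fun n => ((hAmeas n).pow_const 2).ennreal_ofReal
  have hFint : ∀ n, ∫⁻ ω, F n ω ∂ℙ = ENNReal.ofReal (∫ ω, (A n ω) ^ 2 ∂ℙ) := by
    intro n
    rw [← ofReal_integral_eq_lintegral_ofReal]
    · exact int_bdd _ ((hAmeas n).pow_const 2) (B ^ 2) (fun ω => by
        rw [abs_pow]
        exact pow_le_pow_left₀ (abs_nonneg _) (hAbdd n ω) 2)
    · exact Eventually.of_forall fun ω => sq_nonneg _
  have hsummable : ∑' n, ∫⁻ ω, F n ω ∂ℙ ≠ ⊤ := by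
    have hbound : ∀ n, ∫⁻ ω, F n ω ∂ℙ ≤ ENNReal.ofReal (B ^ 2 / (n : ℝ) ^ 2) := by
      intro n
      rcases Nat.eq_zero_or_pos n with h | h
      · subst h
        have : ∀ ω, A 0 ω = 0 := fun ω => by simp [hA]
        rw [hFint]
        simp_rw [this]
        simp
      · rw [hFint]
        exact ENNReal.ofReal_le_ofReal (hAvar n h)
    have hsum : Summable (fun n : ℕ => B ^ 2 / (n : ℝ) ^ 2) := by
      simp_rw [div_eq_mul_inv]
      apply Summable.mul_left
      simpa [one_div] using (Real.summable_one_div_nat_pow (p := 2)).2 (by norm_num)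
    have hle : ∑' n, ∫⁻ ω, F n ω ∂ℙ ≤ ENNReal.ofReal (∑' n : ℕ, B ^ 2 / (n : ℝ) ^ 2) := by
      rw [ENNReal.ofReal_tsum_of_nonneg (fun n => by positivity) hsum]
      exact ENNReal.tsum_le_tsum hbound
    exact ne_top_of_le_ne_top ENNReal.ofReal_ne_top hle
  have hae : ∀ᵐ ω ∂ℙ, ∑' n, F n ω < ⊤ := by
    apply ae_lt_top (by exact Measurable.ennreal_tsum hFmeas)
    rw [lintegral_tsum fun n => (hFmeas n).aemeasurable]
    exact hsummable
  filter_upwards [hae] with ω hω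
  -- F n ω → 0, hence A n ω → 0
  have hF0 : Tendsto (fun n => F n ω) atTop (nhds 0) :=
    ENNReal.tendsto_atTop_zero_of_tsum_ne_top hω.ne
  have hA2 : Tendsto (fun n => (A n ω) ^ 2) atTop (nhds 0) := by
    have hto : Tendsto (fun n => (F n ω).toReal) atTop (nhds (0 : ℝ≥0∞).toReal) :=
      (ENNReal.tendsto_toReal (by simp)).comp hF0
    simpa [hF, ENNReal.toReal_ofReal (sq_nonneg _)] using hto
  have hAten : Tendsto (fun n => A n ω) atTop (nhds 0) := by
    apply (tendsto_zero_iff_abs_tendsto_zero _).2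
    have : Tendsto (fun n => Real.sqrt ((A n ω) ^ 2)) atTop (nhds (Real.sqrt 0)) :=
      (Real.continuous_sqrt.tendsto 0).comp hA2
    simpa [Real.sqrt_sq_eq_abs, Function.comp_def] using this
  -- now gap lemma
  apply gap_lemma B hB (fun n => S n ω) (by simp [hS]) _ hAten
  intro m
  have : S (m + 1) ω - S m ω = D m ω := by
    rw [hS]; simp [Finset.sum_range_succ]
  rw [this]; exact hb m ω


/-- Breiman-type ergodic theorem: for a Feller Markov chain on a compact metric
space, almost surely every weak-* accumulation point of the empirical measures
is a stationary measure. -/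
theorem stmt_8
    {X : Type*} [MetricSpace X] [CompactSpace X]
    [MeasurableSpace X] [BorelSpace X]
    (κ : X → Measure X) (hκp : ∀ x, IsProbabilityMeasure (κ x))
    (hκm : ∀ A : Set X, MeasurableSet A → Measurable fun x => κ x A)
    (hFeller : ∀ φ : X → ℝ, Continuous φ → Continuous fun x => ∫ y, φ y ∂ κ x)
    (μ : Measure X) [IsProbabilityMeasure μ]
    (ℙ : Measure (ℕ → X)) [IsProbabilityMeasure ℙ]
    (h0 : Measure.map (fun ω => ω 0) ℙ = μ)
    (hMarkov : ∀ n : ℕ, ∀ g : X → ℝ, Measurable g → (∃ M, ∀ x, |g x| ≤ M) →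
      ∀ h : (Fin (n + 1) → X) → ℝ, Measurable h → (∃ M, ∀ v, |h v| ≤ M) →
      ∫ ω, h (fun i => ω i.1) * g (ω (n + 1)) ∂ℙ
        = ∫ ω, h (fun i => ω i.1) * (∫ y, g y ∂ κ (ω n)) ∂ℙ) :
    ∀ᵐ ω ∂ℙ, ∀ nk : ℕ → ℕ, StrictMono nk →
      ∀ ν : Measure X, IsProbabilityMeasure ν →
      (∀ φ : X → ℝ, Continuous φ →
        Tendsto (fun k : ℕ => ((nk k : ℝ))⁻¹ * ∑ i ∈ Finset.range (nk k), φ (ω i))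
          atTop (nhds (∫ x, φ x ∂ν))) →
      ∀ A : Set X, MeasurableSet A → ∫⁻ x, κ x A ∂ν = ν A := by
  classical
  -- boundedness of continuous functions on the compact space X
  have bdd : ∀ g : X → ℝ, Continuous g → ∃ M : ℝ, 0 ≤ M ∧ ∀ x, |g x| ≤ M := by
    intro g hg
    obtain ⟨M, hM⟩ := isCompact_univ.exists_bound_of_continuousOn hg.continuousOn
    exact ⟨max M 0, le_max_right _ _, fun x =>
      le_trans (by simpa [Real.norm_eq_abs] using hM x trivial) (le_max_left _ _)⟩
  -- integrability of continuous functions w.r.t. any probability measure on X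
  have intX : ∀ (ρ : Measure X), IsProbabilityMeasure ρ → ∀ g : X → ℝ, Continuous g →
      Integrable g ρ := by
    intro ρ hρ g hg
    haveI := hρ
    obtain ⟨M, _hM0, hM⟩ := bdd g hg
    exact ⟨hg.measurable.aestronglyMeasurable, HasFiniteIntegral.of_bounded (C := M)
      (Eventually.of_forall fun x => by simpa [Real.norm_eq_abs] using hM x)⟩
  -- the kernel operator
  set T : (X → ℝ) → X → ℝ := fun φ x => ∫ y, φ y ∂ κ x with hT
  have hTcont : ∀ φ : X → ℝ, Continuous φ → Continuous (T φ) := fun φ h => hFeller φ h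
  have hTbdd : ∀ (φ : X → ℝ) (M : ℝ), (∀ x, |φ x| ≤ M) → ∀ x, |T φ x| ≤ M := by
    intro φ M hM x
    haveI := hκp x
    have h1 : ‖∫ y, φ y ∂ κ x‖ ≤ M * ((κ x) Set.univ).toReal :=
      norm_integral_le_of_norm_le_const
        (Eventually.of_forall fun y => by simpa [Real.norm_eq_abs] using hM y)
    simpa [hT, measure_univ, Real.norm_eq_abs] using h1
  -- integrability of bounded measurable functions on path space
  have intP : ∀ (f : (ℕ → X) → ℝ), Measurable f → ∀ M : ℝ, (∀ ω, |f ω| ≤ M) →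
      Integrable f ℙ := fun f hf M hM =>
    ⟨hf.aestronglyMeasurable, HasFiniteIntegral.of_bounded (C := M)
      (Eventually.of_forall fun ω => by simpa [Real.norm_eq_abs] using hM ω)⟩
  -- Key: for each fixed continuous φ, a.s. Cesàro averages of φ - Tφ tend to 0
  have key : ∀ φ : X → ℝ, Continuous φ →
      ∀ᵐ ω ∂ℙ, Tendsto
        (fun n : ℕ => (n : ℝ)⁻¹ * ∑ i ∈ Finset.range n, (φ (ω i) - T φ (ω i)))
        atTop (nhds 0) := by
    intro φ hφ
    obtain ⟨C, hC0, hC⟩ := bdd φ hφ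
    set D : ℕ → (ℕ → X) → ℝ := fun i ω => φ (ω (i + 1)) - T φ (ω i) with hD
    have hDmeas : ∀ i, Measurable (D i) := fun i =>
      (hφ.measurable.comp (measurable_pi_apply (i + 1))).sub
        ((hTcont φ hφ).measurable.comp (measurable_pi_apply i))
    have hDb : ∀ i ω, |D i ω| ≤ 2 * C := by
      intro i ω
      calc |D i ω| ≤ |φ (ω (i + 1))| + |T φ (ω i)| := abs_sub _ _
        _ ≤ C + C := add_le_add (hC _) (hTbdd φ C hC _)
        _ = 2 * C := by ring
    have horth : ∀ i j, i < j → ∫ ω, D i ω * D j ω ∂ℙ = 0 := by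
      intro i j hij
      have hi1 : i + 1 < j + 1 := Nat.succ_lt_succ hij
      have hi : i < j + 1 := lt_trans hij (Nat.lt_succ_self j)
      set h : (Fin (j + 1) → X) → ℝ :=
        fun v => φ (v ⟨i + 1, hi1⟩) - T φ (v ⟨i, hi⟩) with hh
      have hhmeas : Measurable h :=
        (hφ.measurable.comp (measurable_pi_apply _)).sub
          ((hTcont φ hφ).measurable.comp (measurable_pi_apply _))
      have hhb : ∀ v, |h v| ≤ 2 * C := by
        intro v
        calc |h v| ≤ |φ _| + |T φ _| := abs_sub _ _
          _ ≤ C + C := add_le_add (hC _) (hTbdd φ C hC _)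
          _ = 2 * C := by ring
      have hM := hMarkov j φ hφ.measurable ⟨C, hC⟩ h hhmeas ⟨2 * C, hhb⟩
      have hcoord : ∀ ω : ℕ → X, h (fun k : Fin (j + 1) => ω k.1) = D i ω := fun ω => rfl
      have int1 : Integrable (fun ω => D i ω * φ (ω (j + 1))) ℙ :=
        intP _ ((hDmeas i).mul (hφ.measurable.comp (measurable_pi_apply _)))
          (2 * C * C) (fun ω => by
            rw [abs_mul]
            exact mul_le_mul (hDb i ω) (hC _) (abs_nonneg _) (by positivity))
      have int2 : Integrable (fun ω => D i ω * T φ (ω j)) ℙ :=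
        intP _ ((hDmeas i).mul ((hTcont φ hφ).measurable.comp (measurable_pi_apply _)))
          (2 * C * C) (fun ω => by
            rw [abs_mul]
            exact mul_le_mul (hDb i ω) (hTbdd φ C hC _) (abs_nonneg _) (by positivity))
      have e1 : ∫ ω, D i ω * D j ω ∂ℙ
          = ∫ ω, D i ω * φ (ω (j + 1)) ∂ℙ - ∫ ω, D i ω * T φ (ω j) ∂ℙ := by
        rw [← integral_sub int1 int2]
        congr 1
        funext ω
        rw [hD]
        ring
      rw [e1]
      have e2 : ∫ ω, D i ω * φ (ω (j + 1)) ∂ℙ = ∫ ω, D i ω * T φ (ω j) ∂ℙ := by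
        have := hM
        simp_rw [hcoord] at this
        exact this
      rw [e2, sub_self]
    have main := aux_main ℙ D hDmeas (2 * C) (by positivity) hDb horth
    filter_upwards [main] with ω hω
    have hdecomp : ∀ n : ℕ, ∑ i ∈ Finset.range n, (φ (ω i) - T φ (ω i))
        = (∑ i ∈ Finset.range n, D i ω) + (φ (ω 0) - φ (ω n)) := by
      intro n
      induction n with
      | zero => simp
      | succ n ih =>
        rw [Finset.sum_range_succ, Finset.sum_range_succ, ih, hD]
        ring
    have h2 : Tendsto (fun n : ℕ => (n : ℝ)⁻¹ * (φ (ω 0) - φ (ω n))) atTop (nhds 0) := by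
      apply (tendsto_zero_iff_abs_tendsto_zero _).2
      apply squeeze_zero' (Eventually.of_forall fun n => abs_nonneg _)
        (Eventually.of_forall fun n => ?_)
        (g := fun n : ℕ => (n : ℝ)⁻¹ * (2 * C))
      · have h3 : Tendsto (fun n : ℕ => ((n : ℝ))⁻¹) atTop (nhds 0) :=
          tendsto_inv_atTop_zero.comp (tendsto_natCast_atTop_atTop (R := ℝ))
        simpa using h3.mul_const (2 * C)
      · rw [abs_mul, abs_of_nonneg (by positivity : (0:ℝ) ≤ ((n : ℕ) : ℝ)⁻¹)]
        apply mul_le_mul_of_nonneg_left _ (by positivity)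
        calc |φ (ω 0) - φ (ω n)| ≤ |φ (ω 0)| + |φ (ω n)| := abs_sub _ _
          _ ≤ C + C := add_le_add (hC _) (hC _)
          _ = 2 * C := by ring
    have := hω.add h2
    have heq : ∀ n : ℕ, (n : ℝ)⁻¹ * (∑ i ∈ Finset.range n, D i ω)
        + (n : ℝ)⁻¹ * (φ (ω 0) - φ (ω n))
        = (n : ℝ)⁻¹ * ∑ i ∈ Finset.range n, (φ (ω i) - T φ (ω i)) := by
      intro n
      rw [hdecomp n]
      ring
    simpa [heq] using this.congr heq
  -- countable dense family of continuous functions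
  obtain ⟨Dset, hDc, hDd⟩ := TopologicalSpace.exists_countable_dense C(X, ℝ)
  have hae : ∀ᵐ ω ∂ℙ, ∀ φ : C(X, ℝ), φ ∈ Dset →
      Tendsto (fun n : ℕ => (n : ℝ)⁻¹ *
        ∑ i ∈ Finset.range n, ((φ : X → ℝ) (ω i) - T (φ : X → ℝ) (ω i)))
        atTop (nhds 0) :=
    (ae_ball_iff hDc).2 fun φ _ => key (φ : X → ℝ) φ.continuous
  filter_upwards [hae] with ω hω
  intro nk hnk ν hν hconv A hA
  haveI := hν
  -- stationarity in integral form
  have hstat : ∀ ψ : X → ℝ, Continuous ψ → ∫ x, ψ x ∂ν = ∫ x, T ψ x ∂ν := by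
    have hDs : ∀ φ : C(X, ℝ), φ ∈ Dset →
        ∫ x, (φ : X → ℝ) x ∂ν = ∫ x, T (φ : X → ℝ) x ∂ν := by
      intro φ hφ
      have t1 := hconv (φ : X → ℝ) φ.continuous
      have t2 := hconv (T (φ : X → ℝ)) (hTcont _ φ.continuous)
      have t3 : Tendsto (fun k : ℕ => ((nk k : ℝ))⁻¹ *
          ∑ i ∈ Finset.range (nk k), ((φ : X → ℝ) (ω i) - T (φ : X → ℝ) (ω i)))
          atTop (nhds 0) := (hω φ hφ).comp hnk.tendsto_atTop
      have t4 := t1.sub t2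
      have heq : ∀ k : ℕ, ((nk k : ℝ))⁻¹ * ∑ i ∈ Finset.range (nk k), (φ : X → ℝ) (ω i)
          - ((nk k : ℝ))⁻¹ * ∑ i ∈ Finset.range (nk k), T (φ : X → ℝ) (ω i)
          = ((nk k : ℝ))⁻¹ *
            ∑ i ∈ Finset.range (nk k), ((φ : X → ℝ) (ω i) - T (φ : X → ℝ) (ω i)) := by
        intro k
        rw [Finset.sum_sub_distrib]
        ring
      have t5 := t4.congr heq
      have := tendsto_nhds_unique t5 t3
      linarith [sub_eq_zero.mp this]
    intro ψ hψ
    apply eq_of_forall_dist_le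
    intro ε hε
    set Ψ : C(X, ℝ) := ⟨ψ, hψ⟩ with hΨ
    obtain ⟨φ, hφD, hφd⟩ := Metric.mem_closure_iff.1 (hDd Ψ) (ε / 2) (by positivity)
    have hsup : ∀ x, |ψ x - (φ : X → ℝ) x| ≤ ε / 2 := by
      intro x
      have h1 : dist (Ψ x) (φ x) ≤ dist Ψ φ := ContinuousMap.dist_apply_le_dist x
      have h2 : dist Ψ φ ≤ ε / 2 := le_of_lt hφd
      calc |ψ x - (φ : X → ℝ) x| = dist (Ψ x) (φ x) := by rw [Real.dist_eq]; rfl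
        _ ≤ ε / 2 := le_trans h1 h2
    have est1 : |∫ x, ψ x ∂ν - ∫ x, (φ : X → ℝ) x ∂ν| ≤ ε / 2 := by
      rw [← integral_sub (intX ν hν ψ hψ) (intX ν hν _ φ.continuous)]
      have := norm_integral_le_of_norm_le_const (μ := ν)
        (f := fun x => ψ x - (φ : X → ℝ) x) (C := ε / 2)
        (Eventually.of_forall fun x => by simpa [Real.norm_eq_abs] using hsup x)
      simpa [measure_univ, Real.norm_eq_abs] using this
    have est2 : ∀ x, |T ψ x - T (φ : X → ℝ) x| ≤ ε / 2 := by
      intro x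
      haveI := hκp x
      have hTsub : T ψ x - T (φ : X → ℝ) x = ∫ y, (ψ y - (φ : X → ℝ) y) ∂ κ x := by
        rw [hT, integral_sub (intX (κ x) (hκp x) ψ hψ) (intX (κ x) (hκp x) _ φ.continuous)]
      rw [hTsub]
      have := norm_integral_le_of_norm_le_const (μ := κ x)
        (f := fun y => ψ y - (φ : X → ℝ) y) (C := ε / 2)
        (Eventually.of_forall fun y => by simpa [Real.norm_eq_abs] using hsup y)
      simpa [measure_univ, Real.norm_eq_abs] using this
    have est3 : |∫ x, T ψ x ∂ν - ∫ x, T (φ : X → ℝ) x ∂ν| ≤ ε / 2 := by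
      rw [← integral_sub (intX ν hν _ (hTcont ψ hψ)) (intX ν hν _ (hTcont _ φ.continuous))]
      have := norm_integral_le_of_norm_le_const (μ := ν)
        (f := fun x => T ψ x - T (φ : X → ℝ) x) (C := ε / 2)
        (Eventually.of_forall fun x => by simpa [Real.norm_eq_abs] using est2 x)
      simpa [measure_univ, Real.norm_eq_abs] using this
    have hmid := hDs φ hφD
    rw [Real.dist_eq]
    calc |∫ x, ψ x ∂ν - ∫ x, T ψ x ∂ν|
        = |(∫ x, ψ x ∂ν - ∫ x, (φ : X → ℝ) x ∂ν)
          + (∫ x, T (φ : X → ℝ) x ∂ν - ∫ x, T ψ x ∂ν)| := by rw [hmid]; ring_nf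
      _ ≤ |∫ x, ψ x ∂ν - ∫ x, (φ : X → ℝ) x ∂ν|
          + |∫ x, T (φ : X → ℝ) x ∂ν - ∫ x, T ψ x ∂ν| := abs_add_le _ _
      _ ≤ ε / 2 + ε / 2 := add_le_add est1 (by rw [abs_sub_comm]; exact est3)
      _ = ε := by ring
  -- conclude via the bind measure
  have hκmeas : Measurable κ := Measure.measurable_of_measurable_coe κ hκm
  have hbind : ν = ν.bind κ := by
    apply ext_of_forall_lintegral_eq_of_IsFiniteMeasure
    intro f
    set g : X → ℝ := fun x => (f x : ℝ) with hg
    have hgc : Continuous g := NNReal.continuous_coe.comp f.continuous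
    have hg0 : ∀ x, 0 ≤ g x := fun x => (f x).2
    have hfm : Measurable fun x => (f x : ℝ≥0∞) :=
      f.continuous.measurable.coe_nnreal_ennreal
    have l1 : ∫⁻ x, (f x : ℝ≥0∞) ∂ν = ENNReal.ofReal (∫ x, g x ∂ν) := by
      rw [ofReal_integral_eq_lintegral_ofReal (intX ν hν g hgc)
        (Eventually.of_forall hg0)]
      congr 1
      funext x
      rw [hg, ENNReal.ofReal_coe_nnreal]
    have l2 : ∀ x, ∫⁻ y, (f y : ℝ≥0∞) ∂ κ x = ENNReal.ofReal (T g x) := by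
      intro x
      rw [hT, ofReal_integral_eq_lintegral_ofReal (intX (κ x) (hκp x) g hgc)
        (Eventually.of_forall hg0)]
      congr 1
      funext y
      rw [hg, ENNReal.ofReal_coe_nnreal]
    have l4 : ∫⁻ x, ENNReal.ofReal (T g x) ∂ν = ENNReal.ofReal (∫ x, T g x ∂ν) :=
      (ofReal_integral_eq_lintegral_ofReal (intX ν hν _ (hTcont g hgc))
        (Eventually.of_forall fun x => by
          rw [hT]; exact integral_nonneg hg0)).symm
    have l3 : ∫⁻ x, (f x : ℝ≥0∞) ∂ (ν.bind κ) = ENNReal.ofReal (∫ x, T g x ∂ν) := by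
      rw [Measure.lintegral_bind hκmeas.aemeasurable hfm.aemeasurable]
      rw [← l4]
      congr 1
      funext x
      exact l2 x
    rw [l1, l3, hstat g hgc]
  rw [← Measure.bind_apply hA hκmeas.aemeasurable, ← hbind]
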